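/- Consider five tasks r, b, gP, o₁, o₂ with frequencies f(r)=3, f(b)=3, f(gP)=6 and f(o₁)=f(o₂)=12, and let S be a valid schedule assigning at most one task to each day (so every window of f consecutive days contains the corresponding task). Suppose additionally that r is scheduled only on days t with t ≡ 0 (mod 3), b is scheduled only on days t with t ≡ 1 (mod 3), and gP is scheduled only on days t with t ≡ 5 (mod 6). Then both o₁ and o₂ are scheduled only on days t with t ≡ 2 (mod 6). (This is the slot-splitting gadget lemma for S_{G12}: the two frequency-12 output edges must be scheduled in green slots.) -/
import Mathlib


/-- Every red slot (t ≡ 0 mod 3) is occupied by task 0. -/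
lemma ssg_red (f : Fin 5 → ℕ) (hf : f = ![3, 3, 6, 12, 12])
    (S : ℕ → Option (Fin 5))
    (hS : ∀ (i : Fin 5) (t : ℕ), ∃ j < f i, S (t + j) = some i)
    (hr : ∀ t : ℕ, S t = some 0 → t % 3 = 0) :
    ∀ t : ℕ, t % 3 = 0 → S t = some 0 := by
  intro t ht
  obtain ⟨j, hj, hSj⟩ := hS 0 t
  have hj3 : j < 3 := by simpa [hf] using hj
  have := hr _ hSj
  have hj0 : j = 0 := by omega
  simpa [hj0] using hSj

/-- Every blue slot (t ≡ 1 mod 3) is occupied by task 1. -/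
lemma ssg_blue (f : Fin 5 → ℕ) (hf : f = ![3, 3, 6, 12, 12])
    (S : ℕ → Option (Fin 5))
    (hS : ∀ (i : Fin 5) (t : ℕ), ∃ j < f i, S (t + j) = some i)
    (hb : ∀ t : ℕ, S t = some 1 → t % 3 = 1) :
    ∀ t : ℕ, t % 3 = 1 → S t = some 1 := by
  intro t ht
  obtain ⟨j, hj, hSj⟩ := hS 1 t
  have hj3 : j < 3 := by simpa [hf] using hj
  have := hb _ hSj
  have hj0 : j = 0 := by omega
  simpa [hj0] using hSj

/-- Every purple slot (t ≡ 5 mod 6) is occupied by task 2. -/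
lemma ssg_purple (f : Fin 5 → ℕ) (hf : f = ![3, 3, 6, 12, 12])
    (S : ℕ → Option (Fin 5))
    (hS : ∀ (i : Fin 5) (t : ℕ), ∃ j < f i, S (t + j) = some i)
    (hgP : ∀ t : ℕ, S t = some 2 → t % 6 = 5) :
    ∀ t : ℕ, t % 6 = 5 → S t = some 2 := by
  intro t ht
  obtain ⟨j, hj, hSj⟩ := hS 2 t
  have hj6 : j < 6 := by simpa [hf] using hj
  have := hgP _ hSj
  have hj0 : j = 0 := by omega
  simpa [hj0] using hSj

/-- Slot-splitting gadget lemma (S_{G12}).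
Tasks: 0 = r (freq 3), 1 = b (freq 3), 2 = gP (freq 6),
3 = o₁ (freq 12), 4 = o₂ (freq 12). In any valid slot-respecting local
schedule (r in red slots t ≡ 0 mod 3, b in blue slots t ≡ 1 mod 3, gP in
purple slots t ≡ 5 mod 6), the two frequency-12 output tasks are scheduled
only in green slots t ≡ 2 mod 6. -/
theorem slot_splitting_gadget (f : Fin 5 → ℕ) (hf : f = ![3, 3, 6, 12, 12])
    (S : ℕ → Option (Fin 5))
    (hS : ∀ (i : Fin 5) (t : ℕ), ∃ j < f i, S (t + j) = some i)
    (hr : ∀ t : ℕ, S t = some 0 → t % 3 = 0)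
    (hb : ∀ t : ℕ, S t = some 1 → t % 3 = 1)
    (hgP : ∀ t : ℕ, S t = some 2 → t % 6 = 5) :
    (∀ t : ℕ, S t = some 3 → t % 6 = 2) ∧
    (∀ t : ℕ, S t = some 4 → t % 6 = 2) := by
  have hred := ssg_red f hf S hS hr
  have hblue := ssg_blue f hf S hS hb
  have hpurple := ssg_purple f hf S hS hgP
  have key : ∀ (i : Fin 5), i ≠ 0 → i ≠ 1 → i ≠ 2 →
      ∀ t : ℕ, S t = some i → t % 6 = 2 := by
    intro i h0 h1 h2 t hSt
    have hnr : t % 3 ≠ 0 := fun h => h0 (by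
      have := hred t h; rw [hSt] at this; exact Option.some_injective _ this)
    have hnb : t % 3 ≠ 1 := fun h => h1 (by
      have := hblue t h; rw [hSt] at this; exact Option.some_injective _ this)
    have hnp : t % 6 ≠ 5 := fun h => h2 (by
      have := hpurple t h; rw [hSt] at this; exact Option.some_injective _ this)
    omega
  exact ⟨key 3 (by decide) (by decide) (by decide),
         key 4 (by decide) (by decide) (by decide)⟩
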